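/- Let μ and ν be probability densities on R^d proportional to e^{f} and e^{g} respectively with f - g bounded. If h: R^d → R^d satisfies ⟨h, Mh⟩ decomposition as in the covariance comparison, then for any unit vector h and the measures p^{t,x}, ν^{t,x} above, the difference of second moments obeys: h^⊤(∫ H_p^{⊗2} dp^{t,x} - ∫ H_ν^{⊗2} dν^{t,x}) h is bounded by a finite sum of products of terms of the form (∫ |h^⊤ H_ν(y,x)|^{θ1} |e^{a(y)} Q_t q(x)/Q_t r(x) - 1|^{θ2} dν^{t,x}(y))^{θ3}, where the exponents satisfy Σ θ1·θ3 = 2 and max θ2·θ3 = 1. -/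

import Mathlib

open MeasureTheory
open scoped InnerProductSpace BigOperators ENNReal NNReal

/-- The density `φ^{t,x}(y)` of the Gaussian with mean `e^{-t} x` and
covariance `(1 - e^{-2t}) Id`. -/
noncomputable def ouKernel (d : ℕ) (t : ℝ) (x y : EuclideanSpace ℝ (Fin d)) : ℝ :=
  (2 * Real.pi * (1 - Real.exp (-2 * t))) ^ (-(d : ℝ) / 2) *
    Real.exp (-‖y - Real.exp (-t) • x‖ ^ 2 / (2 * (1 - Real.exp (-2 * t))))

/-- `Q_t g(x) = ∫ g(y) φ^{t,x}(y) dy`. -/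
noncomputable def QtOf {d : ℕ} (g : EuclideanSpace ℝ (Fin d) → ℝ) (t : ℝ)
    (x : EuclideanSpace ℝ (Fin d)) : ℝ :=
  ∫ y, g y * ouKernel d t x y

/-- The probability measure with density proportional to `g(y) φ^{t,x}(y)`. -/
noncomputable def tiltedOf {d : ℕ} (g : EuclideanSpace ℝ (Fin d) → ℝ) (t : ℝ)
    (x : EuclideanSpace ℝ (Fin d)) : Measure (EuclideanSpace ℝ (Fin d)) :=
  volume.withDensity fun y => ENNReal.ofReal (g y * ouKernel d t x y / QtOf g t x)

/-- The mean of such a measure. -/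
noncomputable def meanOf {d : ℕ} (g : EuclideanSpace ℝ (Fin d) → ℝ) (t : ℝ)
    (x : EuclideanSpace ℝ (Fin d)) : EuclideanSpace ℝ (Fin d) :=
  ∫ z, z ∂(tiltedOf g t x)

/-- Comparison of the covariances of `p^{t,x} ∝ r φ^{t,x}` and
`ν^{t,x} ∝ q φ^{t,x}`, where `r = q e^a` with `a` bounded: for every unit vector `h`,
`|h^⊤ (Cov(p^{t,x}) - Cov(ν^{t,x})) h|` is bounded by a finite sum of products of terms
`(∫ |h^⊤ H_ν|^{θ_{i,1}} |e^{a(y)} Q_t q(x)/Q_t r(x) - 1|^{θ_{i,2}} dν^{t,x})^{θ_{i,3}}`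
with `Σᵢ θ_{i,1} θ_{i,3} = 2` and `maxᵢ θ_{i,2} θ_{i,3} = 1`. -/
theorem covariance_comparison_decomposition
    {d : ℕ} (q a : EuclideanSpace ℝ (Fin d) → ℝ)
    (hq_pos : ∀ y, 0 < q y) (hq_meas : Measurable q) (ha_meas : Measurable a)
    (ha_bdd : ∃ M : ℝ, ∀ y, |a y| ≤ M)
    (r : EuclideanSpace ℝ (Fin d) → ℝ) (hr : ∀ y, r y = q y * Real.exp (a y))
    (hQr_pos : ∀ t > (0:ℝ), ∀ x, 0 < QtOf r t x)
    (hQq_pos : ∀ t > (0:ℝ), ∀ x, 0 < QtOf q t x)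
    (hp_prob : ∀ t > (0:ℝ), ∀ x, IsProbabilityMeasure (tiltedOf r t x))
    (hν_prob : ∀ t > (0:ℝ), ∀ x, IsProbabilityMeasure (tiltedOf q t x))
    (hmom_p : ∀ t > (0:ℝ), ∀ x n, Integrable (fun y => ‖y‖ ^ (n : ℕ)) (tiltedOf r t x))
    (hmom_ν : ∀ t > (0:ℝ), ∀ x n, Integrable (fun y => ‖y‖ ^ (n : ℕ)) (tiltedOf q t x)) :
    ∃ (C : ℝ) (Θ : Finset (Fin 3 → ℕ × ℕ × ℕ)), 0 < C ∧
      (∀ θ ∈ Θ,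
        (∑ i, (θ i).1 * (θ i).2.2) = 2 ∧
        (Finset.univ.sup fun i => (θ i).2.1 * (θ i).2.2) = 1) ∧
      ∀ t > (0:ℝ), ∀ x, ∀ h : EuclideanSpace ℝ (Fin d), ‖h‖ = 1 →
        |(∫ y, ⟪h, y - meanOf r t x⟫_ℝ ^ 2 ∂(tiltedOf r t x))
            - ∫ y, ⟪h, y - meanOf q t x⟫_ℝ ^ 2 ∂(tiltedOf q t x)|
          ≤ C * ∑ θ ∈ Θ, ∏ i : Fin 3,
              (∫ y, |⟪h, y - meanOf q t x⟫_ℝ| ^ ((θ i).1) *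
                  |Real.exp (a y) * QtOf q t x / QtOf r t x - 1| ^ ((θ i).2.1)
                ∂(tiltedOf q t x)) ^ ((θ i).2.2) := by

  classical
  obtain ⟨M, hM⟩ := ha_bdd
  refine ⟨1, {![(2,1,1),(0,0,1),(0,0,1)], ![(1,1,1),(1,1,1),(0,0,1)]}, one_pos,
    by decide, ?_⟩
  intro t ht x h hh
  have hPν : IsProbabilityMeasure (tiltedOf q t x) := hν_prob t ht x
  have hPP : IsProbabilityMeasure (tiltedOf r t x) := hp_prob t ht x
  have hQq : 0 < QtOf q t x := hQq_pos t ht x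
  have hQr : 0 < QtOf r t x := hQr_pos t ht x
  set ν := tiltedOf q t x with hνdef
  set P := tiltedOf r t x with hPdef
  set mν := meanOf q t x with hmνdef
  set mp := meanOf r t x with hmpdef
  set w : EuclideanSpace ℝ (Fin d) → ℝ :=
    fun y => Real.exp (a y) * QtOf q t x / QtOf r t x with hwdef
  set G : EuclideanSpace ℝ (Fin d) → ℝ := fun y => ⟪h, y - mν⟫_ℝ with hGdef
  have hw_pos : ∀ y, 0 < w y := fun y => by
    have := Real.exp_pos (a y); simp only [hwdef]; positivity
  have hK_pos : ∀ y, 0 < ouKernel d t x y := fun y => by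
    unfold ouKernel
    have h1 : 0 < 1 - Real.exp (-2 * t) := by
      have : Real.exp (-2 * t) < 1 := Real.exp_lt_one_iff.mpr (by linarith)
      linarith
    positivity
  have hK_meas : Measurable (fun y => ouKernel d t x y) := by unfold ouKernel; fun_prop
  have hw_meas : Measurable w := by fun_prop
  -- the Radon–Nikodym relation p = w · ν
  have hPw : P = ν.withDensity (fun y => ENNReal.ofReal (w y)) := by
    have hfg : (fun y => ENNReal.ofReal (r y * ouKernel d t x y / QtOf r t x))
        = (fun y => ENNReal.ofReal (q y * ouKernel d t x y / QtOf q t x)) *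
          (fun y => ENNReal.ofReal (w y)) := by
      funext y
      have h1 := hq_pos y; have h2 := hK_pos y
      simp only [Pi.mul_apply]
      rw [← ENNReal.ofReal_mul (by positivity)]
      congr 1
      rw [hr y]
      simp only [hwdef]
      field_simp
    show tiltedOf r t x = _
    rw [tiltedOf, hfg,
      withDensity_mul _ (show Measurable (fun y => ENNReal.ofReal (q y * ouKernel d t x y / QtOf q t x)) from ((hq_meas.mul hK_meas).div_const _).ennreal_ofReal)
        (hw_meas.ennreal_ofReal)]
    rfl
  -- change of variables
  have hCoV : ∀ g : EuclideanSpace ℝ (Fin d) → ℝ,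
      ∫ y, g y ∂P = ∫ y, w y * g y ∂ν := by
    intro g
    rw [hPw]
    have h1 : (fun y => ENNReal.ofReal (w y)) = fun y => ((w y).toNNReal : ℝ≥0∞) := rfl
    rw [h1, integral_withDensity_eq_integral_smul (f := fun y => (w y).toNNReal)
      (by fun_prop) g]
    congr 1; funext y
    simp [NNReal.smul_def, Real.coe_toNNReal _ (hw_pos y).le]
  -- integrability facts
  have hι_ν : Integrable (fun y => y) ν := by
    refine (hmom_ν t ht x 1).mono' measurable_id.aestronglyMeasurable
      (ae_of_all _ fun y => by simp)
  have hι_P : Integrable (fun y => y) P := by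
    refine (hmom_p t ht x 1).mono' measurable_id.aestronglyMeasurable
      (ae_of_all _ fun y => by simp)
  have hsub_ν : Integrable (fun y => y - mν) ν := hι_ν.sub (integrable_const _)
  have hsub_P : Integrable (fun y => y - mν) P := hι_P.sub (integrable_const _)
  have hG : Integrable G ν := hsub_ν.const_inner h
  have hGabs_le : ∀ y, |G y| ≤ ‖y - mν‖ := fun y => by
    simpa [hGdef, hh] using abs_real_inner_le_norm h (y - mν)
  have hG2 : Integrable (fun y => G y ^ 2) ν := by
    have hdom : Integrable (fun y => (‖y‖ + ‖mν‖) ^ 2) ν := by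
      have heq : (fun y : EuclideanSpace ℝ (Fin d) => (‖y‖ + ‖mν‖) ^ 2)
          = fun y => ‖y‖ ^ 2 + ((2 * ‖mν‖) * ‖y‖ ^ 1 + ‖mν‖ ^ 2) := by
        funext y; ring
      rw [heq]
      exact (hmom_ν t ht x 2).add
        (((hmom_ν t ht x 1).const_mul _).add (integrable_const _))
    refine hdom.mono' ?_ (ae_of_all _ fun y => ?_)
    · exact ((Continuous.inner continuous_const
        (continuous_id.sub continuous_const)).pow 2).aestronglyMeasurable
    · have h1 : |G y| ≤ ‖y‖ + ‖mν‖ :=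
        (hGabs_le y).trans ((norm_sub_le _ _).trans (by simp))
      have h2 : |G y| ^ 2 ≤ (‖y‖ + ‖mν‖) ^ 2 :=
        pow_le_pow_left₀ (abs_nonneg _) h1 2
      calc ‖G y ^ 2‖ = |G y| ^ 2 := by rw [Real.norm_eq_abs, abs_pow, sq_abs, ← sq_abs]
        _ ≤ (‖y‖ + ‖mν‖) ^ 2 := h2
  have hw_bdd : ∃ C, ∀ y, ‖w y‖ ≤ C := by
    refine ⟨Real.exp M * QtOf q t x / QtOf r t x, fun y => ?_⟩
    rw [Real.norm_eq_abs, abs_of_pos (hw_pos y)]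
    have hax : Real.exp (a y) ≤ Real.exp M :=
      Real.exp_le_exp.mpr ((le_abs_self _).trans (hM y))
    simp only [hwdef]
    gcongr
  have hwG : Integrable (fun y => w y * G y) ν :=
    hG.bdd_mul hw_meas.aestronglyMeasurable (ae_of_all _ hw_bdd.choose_spec)
  have hwG2 : Integrable (fun y => w y * G y ^ 2) ν :=
    hG2.bdd_mul hw_meas.aestronglyMeasurable (ae_of_all _ hw_bdd.choose_spec)
  have hw_int : Integrable w ν := by
    have := (integrable_const (1:ℝ) (μ := ν)).bdd_mul hw_meas.aestronglyMeasurable (ae_of_all _ hw_bdd.choose_spec)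
    simpa using this
  -- basic integral identities
  have hwint1 : ∫ y, w y ∂ν = 1 := by
    have h0 := hCoV (fun _ => (1:ℝ))
    simp only [mul_one] at h0
    rw [← h0]
    simp
  have hGint : ∫ y, G y ∂ν = 0 := by
    have h1 : ∫ y, G y ∂ν = ⟪h, ∫ y, (y - mν) ∂ν⟫_ℝ := integral_inner hsub_ν h
    rw [h1, integral_sub hι_ν (integrable_const _)]
    have h2 : ∫ (y : EuclideanSpace ℝ (Fin d)), y ∂ν = mν := rfl
    simp [h2]
  have hwGint : ∫ y, w y * G y ∂ν = ⟪h, mp - mν⟫_ℝ := by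
    rw [← hCoV G]
    have h1 : ∫ y, G y ∂P = ⟪h, ∫ y, (y - mν) ∂P⟫_ℝ := integral_inner hsub_P h
    rw [h1, integral_sub hι_P (integrable_const _)]
    have h2 : ∫ (y : EuclideanSpace ℝ (Fin d)), y ∂P = mp := rfl
    simp [h2]
  set δ : ℝ := ⟪h, mν - mp⟫_ℝ with hδdef
  have hδ : δ = -∫ y, w y * G y ∂ν := by
    rw [hwGint, hδdef, ← inner_neg_right]
    congr 1
    abel
  -- the main algebraic identity
  have hLHS : ∫ y, ⟪h, y - mp⟫_ℝ ^ 2 ∂P = ∫ y, w y * (G y + δ) ^ 2 ∂ν := by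
    rw [← hCoV]
    congr 1; funext y
    have h1 : y - mp = (y - mν) + (mν - mp) := by abel
    rw [h1, inner_add_right]
  have hexp : ∫ y, w y * (G y + δ) ^ 2 ∂ν
      = ∫ y, w y * G y ^ 2 ∂ν + 2 * δ * ∫ y, w y * G y ∂ν + δ ^ 2 * ∫ y, w y ∂ν := by
    have heq : (fun y => w y * (G y + δ) ^ 2)
        = fun y => (w y * G y ^ 2) + ((2 * δ) * (w y * G y) + δ ^ 2 * w y) := by
      funext y; ring
    have hI3 : Integrable (fun y => (2 * δ) * (w y * G y)) ν := hwG.const_mul _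
    have hI4 : Integrable (fun y => δ ^ 2 * w y) ν := hw_int.const_mul _
    have hI2 : Integrable (fun y => (2 * δ) * (w y * G y) + δ ^ 2 * w y) ν := hI3.add hI4
    rw [heq, integral_add hwG2 hI2, integral_add hI3 hI4,
      integral_const_mul, integral_const_mul]
    ring
  have hmain : ∫ y, ⟪h, y - mp⟫_ℝ ^ 2 ∂P - ∫ y, ⟪h, y - mν⟫_ℝ ^ 2 ∂ν
      = (∫ y, (w y * G y ^ 2 - G y ^ 2) ∂ν) - δ ^ 2 := by
    have hGν2 : ∫ y, ⟪h, y - mν⟫_ℝ ^ 2 ∂ν = ∫ y, G y ^ 2 ∂ν := rfl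
    have hnd : ⟪h, mp - mν⟫_ℝ = -δ := by
      rw [hδdef, ← inner_neg_right]; congr 1; abel
    rw [hLHS, hexp, hGν2, hwint1, hwGint, hnd, integral_sub hwG2 hG2]
    ring
  -- bounds
  have hδbound : |δ| ≤ ∫ y, |G y| * |w y - 1| ∂ν := by
    have h1 : δ = -∫ y, (w y * G y - G y) ∂ν := by
      rw [integral_sub hwG hG, hGint, hδ]; ring
    rw [h1, abs_neg]
    calc |∫ y, (w y * G y - G y) ∂ν| ≤ ∫ y, |w y * G y - G y| ∂ν := by
          simpa [Real.norm_eq_abs] using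
            norm_integral_le_integral_norm (fun y => w y * G y - G y) (μ := ν)
      _ = ∫ y, |G y| * |w y - 1| ∂ν := by
          refine integral_congr_ae (Filter.Eventually.of_forall fun y => ?_)
          show |w y * G y - G y| = |G y| * |w y - 1|
          have he : w y * G y - G y = G y * (w y - 1) := by ring
          rw [he, abs_mul]
  have hAbound : |∫ y, (w y * G y ^ 2 - G y ^ 2) ∂ν| ≤ ∫ y, |G y| ^ 2 * |w y - 1| ∂ν := by
    calc |∫ y, (w y * G y ^ 2 - G y ^ 2) ∂ν| ≤ ∫ y, |w y * G y ^ 2 - G y ^ 2| ∂ν := by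
          simpa [Real.norm_eq_abs] using
            norm_integral_le_integral_norm (fun y => w y * G y ^ 2 - G y ^ 2) (μ := ν)
      _ = ∫ y, |G y| ^ 2 * |w y - 1| ∂ν := by
          refine integral_congr_ae (Filter.Eventually.of_forall fun y => ?_)
          show |w y * G y ^ 2 - G y ^ 2| = |G y| ^ 2 * |w y - 1|
          have he : w y * G y ^ 2 - G y ^ 2 = G y ^ 2 * (w y - 1) := by ring
          rw [he, abs_mul, abs_pow]
  -- compute the RHS
  have hΘsum : ∑ θ ∈ ({![(2,1,1),(0,0,1),(0,0,1)], ![(1,1,1),(1,1,1),(0,0,1)]} :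
        Finset (Fin 3 → ℕ × ℕ × ℕ)), ∏ i : Fin 3,
          (∫ y, |⟪h, y - mν⟫_ℝ| ^ ((θ i).1) * |w y - 1| ^ ((θ i).2.1) ∂ν) ^ ((θ i).2.2)
      = (∫ y, |G y| ^ 2 * |w y - 1| ∂ν) + (∫ y, |G y| * |w y - 1| ∂ν) ^ 2 := by
    rw [Finset.sum_insert (by decide), Finset.sum_singleton]
    have hone : ∫ (y : EuclideanSpace ℝ (Fin d)), (1:ℝ) ∂ν = 1 := by simp
    simp only [Fin.prod_univ_three, Matrix.cons_val_zero, Matrix.cons_val_one,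
      Matrix.head_cons, Matrix.cons_val_two, Matrix.tail_cons, pow_zero, pow_one,
      mul_one, one_mul]
    rw [hone]
    simp only [hGdef]
    ring
  -- put everything together
  have hwfold : ∀ y, Real.exp (a y) * QtOf q t x / QtOf r t x = w y := fun _ => rfl
  simp only [hwfold]
  rw [hmain, one_mul, hΘsum]
  have hδ2 : δ ^ 2 ≤ (∫ y, |G y| * |w y - 1| ∂ν) ^ 2 := by
    rw [← sq_abs δ]
    exact pow_le_pow_left₀ (abs_nonneg _) hδbound 2
  calc |(∫ y, (w y * G y ^ 2 - G y ^ 2) ∂ν) - δ ^ 2|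
      ≤ |∫ y, (w y * G y ^ 2 - G y ^ 2) ∂ν| + |δ ^ 2| := abs_sub _ _
    _ ≤ (∫ y, |G y| ^ 2 * |w y - 1| ∂ν) + (∫ y, |G y| * |w y - 1| ∂ν) ^ 2 := by
        have : |δ ^ 2| = δ ^ 2 := abs_of_nonneg (sq_nonneg _)
        rw [this]
        exact add_le_add hAbound hδ2
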